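/- arXiv:1002.5041 — 5 statements merged into one kernel-verified Lean document; each statement's English description precedes it below -/
import Mathlib

section
/- Let f, g : (0,∞) → ℝ be continuous functions with g(K) > 0 for all K, lim_{K→0⁺} f(K) = lim_{K→∞} f(K) = 0 and lim_{K→0⁺} g(K) = lim_{K→∞} g(K) = 0, and define F(K₁,K₂) = (g(K₂)f(K₁) − g(K₁)f(K₂))/(g(K₁)+g(K₂)). If F(K₁,K₂) > 0 for some pair (K₁,K₂), then F attains its global maximum on (0,∞)², and every global maximizer (K₁*,K₂*) satisfies K₁* ≠ K₂*. -/
open Set Filter Topology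

/-- If the two-strike objective function `F` is somewhere positive,
it attains its global maximum on `(0,∞)²`, and every global maximizer has
distinct strikes. -/
theorem two_strike_objective_attains_max
    (f g : ℝ → ℝ)
    (hf_cont : ContinuousOn f (Ioi 0)) (hg_cont : ContinuousOn g (Ioi 0))
    (hg_pos : ∀ K ∈ Ioi (0:ℝ), 0 < g K)
    (hf0 : Tendsto f (𝓝[>] 0) (𝓝 0)) (hfinf : Tendsto f atTop (𝓝 0))
    (hg0 : Tendsto g (𝓝[>] 0) (𝓝 0)) (hginf : Tendsto g atTop (𝓝 0))
    (F : ℝ → ℝ → ℝ)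
    (hF : ∀ K₁ K₂, F K₁ K₂ = (g K₂ * f K₁ - g K₁ * f K₂) / (g K₁ + g K₂))
    (hpos : ∃ K₁ ∈ Ioi (0:ℝ), ∃ K₂ ∈ Ioi (0:ℝ), 0 < F K₁ K₂) :
    (∃ K₁ ∈ Ioi (0:ℝ), ∃ K₂ ∈ Ioi (0:ℝ),
        ∀ L₁ ∈ Ioi (0:ℝ), ∀ L₂ ∈ Ioi (0:ℝ), F L₁ L₂ ≤ F K₁ K₂) ∧
    (∀ K₁ ∈ Ioi (0:ℝ), ∀ K₂ ∈ Ioi (0:ℝ),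
        (∀ L₁ ∈ Ioi (0:ℝ), ∀ L₂ ∈ Ioi (0:ℝ), F L₁ L₂ ≤ F K₁ K₂) → K₁ ≠ K₂) := by
  obtain ⟨a, ha, b, hb, hFab⟩ := hpos
  rw [mem_Ioi] at ha hb
  set c := F a b with hc_def
  have hc : 0 < c := hFab
  have hc2 : 0 < c / 2 := by positivity
  -- small-f near 0
  obtain ⟨ε₁, hε₁pos, hε₁⟩ : ∃ ε₁ > 0, ∀ x : ℝ, 0 < x → x < ε₁ → |f x| < c / 2 := by
    obtain ⟨d, hd, h⟩ := Metric.tendsto_nhdsWithin_nhds.mp hf0 (c / 2) hc2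
    refine ⟨d, hd, fun x hx hxd => ?_⟩
    have := h (mem_Ioi.mpr hx) (by simpa [Real.dist_eq, abs_of_pos hx] using hxd)
    simpa [Real.dist_eq] using this
  obtain ⟨N₁, hN₁⟩ : ∃ N₁ : ℝ, ∀ x ≥ N₁, |f x| < c / 2 := by
    have h := eventually_atTop.mp ((Metric.tendsto_nhds.mp hfinf) (c / 2) hc2)
    obtain ⟨N, hN⟩ := h
    exact ⟨N, fun x hx => by simpa [Real.dist_eq] using hN x hx⟩
  set ε₀ : ℝ := min (ε₁ / 2) (min a b) with hε₀def
  set M₀ : ℝ := max N₁ (max a b) with hM₀def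
  have hε₀pos : 0 < ε₀ := by
    apply lt_min (by positivity) (lt_min ha hb)
  have hε₀a : ε₀ ≤ a := le_trans (min_le_right _ _) (min_le_left _ _)
  have hε₀b : ε₀ ≤ b := le_trans (min_le_right _ _) (min_le_right _ _)
  have haM₀ : a ≤ M₀ := le_trans (le_max_left _ _) (le_max_right _ _)
  have hbM₀ : b ≤ M₀ := le_trans (le_max_right _ _) (le_max_right _ _)
  have hε₀M₀ : ε₀ ≤ M₀ := le_trans hε₀a haM₀
  have hsub₀ : Icc ε₀ M₀ ⊆ Ioi 0 := fun x hx => lt_of_lt_of_le hε₀pos hx.1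
  have hne₀ : (Icc ε₀ M₀).Nonempty := ⟨a, hε₀a, haM₀⟩
  have hsmall_f : ∀ x : ℝ, 0 < x → x ∉ Icc ε₀ M₀ → |f x| < c / 2 := by
    intro x hx hxn
    rcases lt_or_ge x ε₀ with h | h
    · exact hε₁ x hx (lt_of_lt_of_le h (le_trans (min_le_left _ _) (by linarith)))
    · have hM : M₀ < x := lt_of_not_ge fun hle => hxn ⟨h, hle⟩
      exact hN₁ x (le_trans (le_max_left _ _) hM.le)
  -- min of g and max of |f| on the core square
  obtain ⟨x₀, hx₀, hδmin⟩ := isCompact_Icc.exists_isMinOn hne₀ (hg_cont.mono hsub₀)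
  set δ := g x₀ with hδdef
  have hδpos : 0 < δ := hg_pos x₀ (hsub₀ hx₀)
  have hδ : ∀ x ∈ Icc ε₀ M₀, δ ≤ g x := fun x hx => hδmin hx
  obtain ⟨y₀, hy₀, hBmax⟩ := isCompact_Icc.exists_isMaxOn hne₀ ((hf_cont.mono hsub₀).abs)
  set Bf := |f y₀| with hBdef
  have hBnn : 0 ≤ Bf := abs_nonneg _
  have hB : ∀ x ∈ Icc ε₀ M₀, |f x| ≤ Bf := fun x hx => hBmax hx
  obtain ⟨G, hGpos, hGkey⟩ : ∃ G : ℝ, 0 < G ∧ 2 * (G * Bf) + 2 * G = c * δ :=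
    ⟨c * δ / (2 * (Bf + 1)), by positivity, by field_simp⟩
  -- small-g thresholds
  obtain ⟨εg, hεgpos, hεg⟩ : ∃ εg > 0, ∀ x : ℝ, 0 < x → x < εg → g x < G := by
    obtain ⟨d, hd, h⟩ := Metric.tendsto_nhdsWithin_nhds.mp hg0 G hGpos
    refine ⟨d, hd, fun x hx hxd => ?_⟩
    have := h (mem_Ioi.mpr hx) (by simpa [Real.dist_eq, abs_of_pos hx] using hxd)
    rw [Real.dist_eq, sub_zero] at this
    exact lt_of_le_of_lt (le_abs_self _) this
  obtain ⟨Ng, hNg⟩ : ∃ Ng : ℝ, ∀ x ≥ Ng, g x < G := by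
    obtain ⟨N, hN⟩ := eventually_atTop.mp ((Metric.tendsto_nhds.mp hginf) G hGpos)
    refine ⟨N, fun x hx => ?_⟩
    have := hN x hx
    rw [Real.dist_eq, sub_zero] at this
    exact lt_of_le_of_lt (le_abs_self _) this
  set ε : ℝ := min εg ε₀ with hεdef
  set M : ℝ := max Ng M₀ with hMdef
  have hεpos : 0 < ε := lt_min hεgpos hε₀pos
  have hεε₀ : ε ≤ ε₀ := min_le_right _ _
  have hM₀M : M₀ ≤ M := le_max_right _ _
  have hεM : ε ≤ M := le_trans (le_trans hεε₀ hε₀M₀) hM₀M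
  have hsubIcc : Icc ε₀ M₀ ⊆ Icc ε M := Icc_subset_Icc hεε₀ hM₀M
  have hsub : Icc ε M ⊆ Ioi 0 := fun x hx => lt_of_lt_of_le hεpos hx.1
  have hsmall_g : ∀ x : ℝ, 0 < x → x ∉ Icc ε M → g x < G := by
    intro x hx hxn
    rcases lt_or_ge x ε with h | h
    · exact hεg x hx (lt_of_lt_of_le h (min_le_left _ _))
    · have hM' : M < x := lt_of_not_ge fun hle => hxn ⟨h, hle⟩
      exact hNg x (le_trans (le_max_left _ _) hM'.le)
  -- key bound lemma
  have hFle : ∀ K₁ : ℝ, 0 < K₁ → ∀ K₂ : ℝ, 0 < K₂ →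
      g K₂ * |f K₁| + g K₁ * |f K₂| < c * (g K₁ + g K₂) → F K₁ K₂ < c := by
    intro K₁ hK₁ K₂ hK₂ hnum
    have hg₁ := hg_pos K₁ (mem_Ioi.mpr hK₁)
    have hg₂ := hg_pos K₂ (mem_Ioi.mpr hK₂)
    rw [hF, div_lt_iff₀ (by linarith)]
    have h1 : f K₁ ≤ |f K₁| := le_abs_self _
    have h2 : -|f K₂| ≤ f K₂ := neg_abs_le _
    nlinarith [mul_le_mul_of_nonneg_left h1 hg₂.le, mul_le_mul_of_nonneg_left h2 hg₁.le]
  -- outside the big square, F < c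
  have houtside : ∀ K₁ : ℝ, 0 < K₁ → ∀ K₂ : ℝ, 0 < K₂ →
      (K₁, K₂) ∉ (Icc ε M ×ˢ Icc ε M) → F K₁ K₂ < c := by
    intro K₁ hK₁ K₂ hK₂ hout
    have hg₁ := hg_pos K₁ (mem_Ioi.mpr hK₁)
    have hg₂ := hg_pos K₂ (mem_Ioi.mpr hK₂)
    rw [mem_prod, not_and_or] at hout
    apply hFle K₁ hK₁ K₂ hK₂
    have habs₁ : 0 ≤ |f K₁| := abs_nonneg _
    have habs₂ : 0 ≤ |f K₂| := abs_nonneg _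
    rcases hout with h1 | h2
    · -- K₁ outside big square
      have hf₁ : |f K₁| < c / 2 := hsmall_f K₁ hK₁ (fun hm => h1 (hsubIcc hm))
      have hg₁G : g K₁ < G := hsmall_g K₁ hK₁ h1
      by_cases hK₂in : K₂ ∈ Icc ε₀ M₀
      · -- case B
        have hδ₂ : δ ≤ g K₂ := hδ K₂ hK₂in
        have hB₂ : |f K₂| ≤ Bf := hB K₂ hK₂in
        have u1 : g K₁ * |f K₂| ≤ G * Bf := mul_le_mul hg₁G.le hB₂ habs₂ hGpos.le
        have u2 : g K₂ * |f K₁| < g K₂ * (c / 2) := mul_lt_mul_of_pos_left hf₁ hg₂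
        have u3 : c * δ ≤ c * g K₂ := mul_le_mul_of_nonneg_left hδ₂ hc.le
        have u4 : 0 < c * g K₁ := by positivity
        have u5 : g K₂ * (c / 2) = c * g K₂ / 2 := by ring
        have u6 : c * (g K₁ + g K₂) = c * g K₁ + c * g K₂ := by ring
        linarith
      · -- both f small
        have hf₂ : |f K₂| < c / 2 := hsmall_f K₂ hK₂ hK₂in
        have u2 : g K₂ * |f K₁| < g K₂ * (c / 2) := mul_lt_mul_of_pos_left hf₁ hg₂
        have u2' : g K₁ * |f K₂| < g K₁ * (c / 2) := mul_lt_mul_of_pos_left hf₂ hg₁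
        have u4 : 0 < c * g K₁ := by positivity
        have u4' : 0 < c * g K₂ := by positivity
        have u5 : g K₂ * (c / 2) = c * g K₂ / 2 := by ring
        have u5' : g K₁ * (c / 2) = c * g K₁ / 2 := by ring
        have u6 : c * (g K₁ + g K₂) = c * g K₁ + c * g K₂ := by ring
        linarith
    · -- K₂ outside big square
      have hf₂ : |f K₂| < c / 2 := hsmall_f K₂ hK₂ (fun hm => h2 (hsubIcc hm))
      have hg₂G : g K₂ < G := hsmall_g K₂ hK₂ h2
      by_cases hK₁in : K₁ ∈ Icc ε₀ M₀
      · have hδ₁ : δ ≤ g K₁ := hδ K₁ hK₁in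
        have hB₁ : |f K₁| ≤ Bf := hB K₁ hK₁in
        have u1 : g K₂ * |f K₁| ≤ G * Bf := mul_le_mul hg₂G.le hB₁ habs₁ hGpos.le
        have u2 : g K₁ * |f K₂| < g K₁ * (c / 2) := mul_lt_mul_of_pos_left hf₂ hg₁
        have u3 : c * δ ≤ c * g K₁ := mul_le_mul_of_nonneg_left hδ₁ hc.le
        have u4 : 0 < c * g K₂ := by positivity
        have u5 : g K₁ * (c / 2) = c * g K₁ / 2 := by ring
        have u6 : c * (g K₁ + g K₂) = c * g K₁ + c * g K₂ := by ring
        linarith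
      · have hf₁ : |f K₁| < c / 2 := hsmall_f K₁ hK₁ hK₁in
        have u2 : g K₂ * |f K₁| < g K₂ * (c / 2) := mul_lt_mul_of_pos_left hf₁ hg₂
        have u2' : g K₁ * |f K₂| < g K₁ * (c / 2) := mul_lt_mul_of_pos_left hf₂ hg₁
        have u4 : 0 < c * g K₁ := by positivity
        have u4' : 0 < c * g K₂ := by positivity
        have u5 : g K₂ * (c / 2) = c * g K₂ / 2 := by ring
        have u5' : g K₁ * (c / 2) = c * g K₁ / 2 := by ring
        have u6 : c * (g K₁ + g K₂) = c * g K₁ + c * g K₂ := by ring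
        linarith
  -- continuity of F on the compact square
  set S : Set (ℝ × ℝ) := Icc ε M ×ˢ Icc ε M with hSdef
  have hScomp : IsCompact S := isCompact_Icc.prod isCompact_Icc
  have habS : (a, b) ∈ S := ⟨hsubIcc ⟨hε₀a, haM₀⟩, hsubIcc ⟨hε₀b, hbM₀⟩⟩
  have hSne : S.Nonempty := ⟨(a, b), habS⟩
  have hfst : ∀ p ∈ S, p.1 ∈ Ioi (0:ℝ) := fun p hp => hsub hp.1
  have hsnd : ∀ p ∈ S, p.2 ∈ Ioi (0:ℝ) := fun p hp => hsub hp.2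
  have hg1c : ContinuousOn (fun p : ℝ × ℝ => g p.1) S :=
    hg_cont.comp continuousOn_fst hfst
  have hg2c : ContinuousOn (fun p : ℝ × ℝ => g p.2) S :=
    hg_cont.comp continuousOn_snd hsnd
  have hf1c : ContinuousOn (fun p : ℝ × ℝ => f p.1) S :=
    hf_cont.comp continuousOn_fst hfst
  have hf2c : ContinuousOn (fun p : ℝ × ℝ => f p.2) S :=
    hf_cont.comp continuousOn_snd hsnd
  have hΦc : ContinuousOn (fun p : ℝ × ℝ => F p.1 p.2) S := by
    have : ContinuousOn
        (fun p : ℝ × ℝ => (g p.2 * f p.1 - g p.1 * f p.2) / (g p.1 + g p.2)) S := by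
      apply ContinuousOn.div ((hg2c.mul hf1c).sub (hg1c.mul hf2c)) (hg1c.add hg2c)
      intro p hp
      have := hg_pos p.1 (hfst p hp)
      have := hg_pos p.2 (hsnd p hp)
      exact ne_of_gt (by simp only [Pi.add_apply]; linarith)
    exact this.congr (fun p _ => by rw [hF])
  obtain ⟨p, hpS, hpmax⟩ := hScomp.exists_isMaxOn hSne hΦc
  have hpmax' : ∀ q ∈ S, F q.1 q.2 ≤ F p.1 p.2 := fun q hq => hpmax hq
  have hcle : c ≤ F p.1 p.2 := hpmax' (a, b) habS
  constructor
  · refine ⟨p.1, hfst p hpS, p.2, hsnd p hpS, ?_⟩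
    intro L₁ hL₁ L₂ hL₂
    rw [mem_Ioi] at hL₁ hL₂
    by_cases hLS : (L₁, L₂) ∈ S
    · exact hpmax' (L₁, L₂) hLS
    · exact le_trans (houtside L₁ hL₁ L₂ hL₂ hLS).le hcle
  · intro K₁ hK₁ K₂ hK₂ hmax heq
    have h1 : c ≤ F K₁ K₂ := hmax a (mem_Ioi.mpr ha) b (mem_Ioi.mpr hb)
    have h0 : F K₁ K₂ = 0 := by
      rw [heq, hF, sub_self, zero_div]
    linarith
end

section
/- Let (X,𝒜) be a measurable space, f, g : X → ℝ bounded measurable functions with g(x) ≥ δ for all x, for some δ > 0, and let ν⁺, ν⁻ be probability measures on X. Then (∫ g dν⁻ · ∫ f dν⁺ − ∫ g dν⁺ · ∫ f dν⁻)/(∫ g dν⁺ + ∫ g dν⁻) ≤ sup_{x₁,x₂ ∈ X} (g(x₂)f(x₁) − g(x₁)f(x₂))/(g(x₁)+g(x₂)). -/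
open MeasureTheory Set

/-- The normalized antisymmetric bilinear expression in two
probability measures is bounded by the supremum of the corresponding
two-point expression. -/
theorem bilinear_expression_le_two_point_sup
    {X : Type*} [MeasurableSpace X]
    (f g : X → ℝ) (hf_meas : Measurable f) (hg_meas : Measurable g)
    (hf_bdd : ∃ C : ℝ, ∀ x, |f x| ≤ C) (hg_bdd : ∃ C : ℝ, ∀ x, |g x| ≤ C)
    (δ : ℝ) (hδ : 0 < δ) (hgδ : ∀ x, δ ≤ g x)
    (νp νn : Measure X) [IsProbabilityMeasure νp] [IsProbabilityMeasure νn] :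
    ((∫ x, g x ∂νn) * (∫ x, f x ∂νp) - (∫ x, g x ∂νp) * (∫ x, f x ∂νn)) /
      ((∫ x, g x ∂νp) + (∫ x, g x ∂νn)) ≤
    ⨆ p : X × X, (g p.2 * f p.1 - g p.1 * f p.2) / (g p.1 + g p.2) := by
  obtain ⟨Cf, hCf⟩ := hf_bdd
  obtain ⟨Cg, hCg⟩ := hg_bdd
  have hne : Nonempty X := by
    by_contra h
    rw [not_nonempty_iff] at h
    have h1 : (νp : Measure X) Set.univ = 1 := measure_univ
    rw [Set.univ_eq_empty_iff.mpr h] at h1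
    simp at h1
  have hgpos : ∀ x, 0 < g x := fun x => lt_of_lt_of_le hδ (hgδ x)
  have hCf0 : 0 ≤ Cf := le_trans (abs_nonneg _) (hCf (Classical.arbitrary X))
  have hCg0 : 0 ≤ Cg := le_trans (abs_nonneg _) (hCg (Classical.arbitrary X))
  -- bounded above
  have hbdd : BddAbove (Set.range fun p : X × X =>
      (g p.2 * f p.1 - g p.1 * f p.2) / (g p.1 + g p.2)) := by
    refine ⟨(2 * (Cg * Cf)) / (2 * δ), ?_⟩
    rintro _ ⟨⟨x₁, x₂⟩, rfl⟩
    have hden : (0:ℝ) < 2 * δ := by linarith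
    have hden2 : 2 * δ ≤ g x₁ + g x₂ := by
      have := hgδ x₁; have := hgδ x₂; linarith
    have hnum : g x₂ * f x₁ - g x₁ * f x₂ ≤ 2 * (Cg * Cf) := by
      have h1 : g x₂ * f x₁ ≤ Cg * Cf := by
        calc g x₂ * f x₁ ≤ |g x₂ * f x₁| := le_abs_self _
          _ = |g x₂| * |f x₁| := abs_mul _ _
          _ ≤ Cg * Cf := mul_le_mul (hCg _) (hCf _) (abs_nonneg _) hCg0
      have h2 : -(Cg * Cf) ≤ g x₁ * f x₂ := by
        have : |g x₁ * f x₂| ≤ Cg * Cf := by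
          rw [abs_mul]
          exact mul_le_mul (hCg _) (hCf _) (abs_nonneg _) hCg0
        linarith [neg_abs_le (g x₁ * f x₂)]
      linarith
    exact div_le_div₀ (by positivity) hnum hden hden2
  set S := ⨆ p : X × X, (g p.2 * f p.1 - g p.1 * f p.2) / (g p.1 + g p.2) with hS
  -- pointwise inequality
  have hpt : ∀ x₁ x₂, g x₂ * f x₁ - g x₁ * f x₂ ≤ S * (g x₁ + g x₂) := by
    intro x₁ x₂
    have hden : (0:ℝ) < g x₁ + g x₂ := by
      have := hgpos x₁; have := hgpos x₂; linarith
    have := le_ciSup hbdd (x₁, x₂)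
    exact (div_le_iff₀ hden).mp this
  -- integrability
  have hif : ∀ (μ : Measure X) [IsProbabilityMeasure μ], Integrable f μ := by
    intro μ _
    exact (integrable_const Cf).mono' hf_meas.aestronglyMeasurable
      (Filter.Eventually.of_forall hCf)
  have hig : ∀ (μ : Measure X) [IsProbabilityMeasure μ], Integrable g μ := by
    intro μ _
    exact (integrable_const Cg).mono' hg_meas.aestronglyMeasurable
      (Filter.Eventually.of_forall hCg)
  set Ifp := ∫ x, f x ∂νp with hIfp
  set Ifn := ∫ x, f x ∂νn with hIfn
  set Igp := ∫ x, g x ∂νp with hIgp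
  set Ign := ∫ x, g x ∂νn with hIgn
  -- first integration (over x₁ w.r.t. νp), for fixed x₂
  have hstep1 : ∀ x₂, g x₂ * Ifp - Igp * f x₂ ≤ S * (Igp + g x₂) := by
    intro x₂
    have hmono : ∫ x₁, (g x₂ * f x₁ - g x₁ * f x₂) ∂νp
        ≤ ∫ x₁, S * (g x₁ + g x₂) ∂νp := by
      apply integral_mono
      · exact ((hif νp).const_mul _).sub ((hig νp).mul_const _)
      · exact (((hig νp).add (integrable_const _)).const_mul _)
      · intro x₁; exact hpt x₁ x₂
    have hL : ∫ x₁, (g x₂ * f x₁ - g x₁ * f x₂) ∂νp = g x₂ * Ifp - Igp * f x₂ := by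
      rw [integral_sub ((hif νp).const_mul _) ((hig νp).mul_const _),
        integral_const_mul, integral_mul_const]
    have hR : ∫ x₁, S * (g x₁ + g x₂) ∂νp = S * (Igp + g x₂) := by
      rw [integral_const_mul, integral_add (hig νp) (integrable_const _),
        integral_const]
      simp [hIgp]
    rw [hL, hR] at hmono
    exact hmono
  -- second integration (over x₂ w.r.t. νn)
  have hstep2 : Ign * Ifp - Igp * Ifn ≤ S * (Igp + Ign) := by
    have hmono : ∫ x₂, (g x₂ * Ifp - Igp * f x₂) ∂νn
        ≤ ∫ x₂, S * (Igp + g x₂) ∂νn := by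
      apply integral_mono
      · exact ((hig νn).mul_const _).sub ((hif νn).const_mul _)
      · exact (((integrable_const _).add (hig νn)).const_mul _)
      · exact hstep1
    have hL : ∫ x₂, (g x₂ * Ifp - Igp * f x₂) ∂νn = Ign * Ifp - Igp * Ifn := by
      rw [integral_sub ((hig νn).mul_const _) ((hif νn).const_mul _),
        integral_mul_const, integral_const_mul]
    have hR : ∫ x₂, S * (Igp + g x₂) ∂νn = S * (Igp + Ign) := by
      rw [integral_const_mul, integral_add (integrable_const _) (hig νn),
        integral_const]
      simp [hIgn]
    rw [hL, hR] at hmono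
    exact hmono
  -- conclude
  have hIgp_pos : δ ≤ Igp := by
    have : ∫ (_ : X), δ ∂νp ≤ Igp :=
      integral_mono (integrable_const _) (hig νp) hgδ
    simpa using this
  have hIgn_pos : δ ≤ Ign := by
    have : ∫ (_ : X), δ ∂νn ≤ Ign :=
      integral_mono (integrable_const _) (hig νn) hgδ
    simpa using this
  have hD : 0 < Igp + Ign := by linarith
  rw [div_le_iff₀ hD]
  linarith [hstep2]
end

section
/- Let (X,𝒜) be a measurable space, f, g : X → ℝ bounded measurable functions with g(x) ≥ δ for all x, for some δ > 0. Then for every finite signed measure ω on X with total variation norm ‖ω‖_TV = 1 and ∫ g dω = 0, one has ∫ f dω ≤ sup_{x₁,x₂ ∈ X} (g(x₂)f(x₁) − g(x₁)f(x₂))/(g(x₁)+g(x₂)). -/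
open MeasureTheory Set

/-- Integral of a function with respect to a finite signed measure, defined via
the Jordan decomposition. -/
noncomputable def signedIntegral {X : Type*} [MeasurableSpace X]
    (f : X → ℝ) (ω : SignedMeasure X) : ℝ :=
  (∫ x, f x ∂ω.toJordanDecomposition.posPart)
    - (∫ x, f x ∂ω.toJordanDecomposition.negPart)

/-- Over all unit total-variation signed measures `ω` satisfying
the neutrality constraint `∫ g dω = 0`, the profit `∫ f dω` is dominated by the
best two-point spread. -/
theorem signed_integral_le_two_point_sup
    {X : Type*} [MeasurableSpace X]
    (f g : X → ℝ) (hf_meas : Measurable f) (hg_meas : Measurable g)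
    (hf_bdd : ∃ C : ℝ, ∀ x, |f x| ≤ C) (hg_bdd : ∃ C : ℝ, ∀ x, |g x| ≤ C)
    (δ : ℝ) (hδ : 0 < δ) (hgδ : ∀ x, δ ≤ g x) :
    ∀ ω : SignedMeasure X, ω.totalVariation univ = 1 →
      signedIntegral g ω = 0 →
      signedIntegral f ω ≤
        ⨆ p : X × X, (g p.2 * f p.1 - g p.1 * f p.2) / (g p.1 + g p.2) := by
  intro ω hTV hneut
  obtain ⟨Cf, hCf⟩ := hf_bdd
  obtain ⟨Cg, hCg⟩ := hg_bdd
  set μ := ω.toJordanDecomposition.posPart with hμ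
  set ν := ω.toJordanDecomposition.negPart with hν
  -- X is nonempty
  have htv : μ univ + ν univ = 1 := by
    simpa [SignedMeasure.totalVariation, Measure.add_apply] using hTV
  haveI : Nonempty X := by
    rcases isEmpty_or_nonempty X with h | h
    · exfalso
      have : (univ : Set X) = ∅ := Set.univ_eq_empty_iff.mpr h
      rw [this] at htv
      simp at htv
    · exact h
  have hCf0 : 0 ≤ Cf := le_trans (abs_nonneg _) (hCf (Classical.arbitrary X))
  have hCg0 : 0 ≤ Cg := le_trans (abs_nonneg _) (hCg (Classical.arbitrary X))
  -- masses
  set a : ℝ := (μ univ).toReal with ha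
  set b : ℝ := (ν univ).toReal with hb
  have hab : a + b = 1 := by
    have h1 : ((μ univ + ν univ).toReal) = (1 : ENNReal).toReal := by rw [htv]
    rw [ENNReal.toReal_add (measure_ne_top μ _) (measure_ne_top ν _)] at h1
    simpa using h1
  have ha0 : 0 ≤ a := ENNReal.toReal_nonneg
  have hb0 : 0 ≤ b := ENNReal.toReal_nonneg
  -- integrability
  have hint : ∀ (h : X → ℝ) (C : ℝ), Measurable h → (∀ x, |h x| ≤ C) →
      ∀ (m : Measure X) [IsFiniteMeasure m], Integrable h m := by
    intro h C hm hC m _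
    exact (integrable_const C).mono' hm.aestronglyMeasurable
      (Filter.Eventually.of_forall fun x => by simpa using hC x)
  have hfμ : Integrable f μ := hint f Cf hf_meas hCf μ
  have hfν : Integrable f ν := hint f Cf hf_meas hCf ν
  have hgμ : Integrable g μ := hint g Cg hg_meas hCg μ
  have hgν : Integrable g ν := hint g Cg hg_meas hCg ν
  set F₁ : ℝ := ∫ x, f x ∂μ with hF₁
  set F₂ : ℝ := ∫ x, f x ∂ν with hF₂
  set G : ℝ := ∫ x, g x ∂μ with hG
  have hGν : ∫ x, g x ∂ν = G := by
    have : G - ∫ x, g x ∂ν = 0 := hneut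
    linarith
  -- G ≥ δ/2 > 0
  have hGa : δ * a ≤ G := by
    have := integral_mono (integrable_const δ) hgμ hgδ
    simpa [integral_const, smul_eq_mul, mul_comm, ha, Measure.real] using this
  have hGb : δ * b ≤ G := by
    have := integral_mono (integrable_const δ) hgν hgδ
    rw [hGν] at this
    simpa [integral_const, smul_eq_mul, mul_comm, hb, Measure.real] using this
  have hGpos : 0 < G := by nlinarith
  -- the supremum
  set S : ℝ := ⨆ p : X × X, (g p.2 * f p.1 - g p.1 * f p.2) / (g p.1 + g p.2) with hS
  have hbdd : BddAbove (Set.range fun p : X × X =>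
      (g p.2 * f p.1 - g p.1 * f p.2) / (g p.1 + g p.2)) := by
    refine ⟨(Cg * Cf + Cg * Cf) / (δ + δ), ?_⟩
    rintro _ ⟨p, rfl⟩
    have hden : 0 < g p.1 + g p.2 := by
      have := hgδ p.1; have := hgδ p.2; linarith
    have hnum : g p.2 * f p.1 - g p.1 * f p.2 ≤ Cg * Cf + Cg * Cf := by
      have h1 : g p.2 * f p.1 ≤ Cg * Cf := by
        have := abs_mul (g p.2) (f p.1)
        have h2 : |g p.2 * f p.1| ≤ Cg * Cf := by
          rw [abs_mul]; exact mul_le_mul (hCg _) (hCf _) (abs_nonneg _) hCg0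
        exact le_trans (le_abs_self _) h2
      have h2 : -(Cg * Cf) ≤ g p.1 * f p.2 := by
        have h3 : |g p.1 * f p.2| ≤ Cg * Cf := by
          rw [abs_mul]; exact mul_le_mul (hCg _) (hCf _) (abs_nonneg _) hCg0
        linarith [neg_abs_le (g p.1 * f p.2)]
      linarith
    calc (g p.2 * f p.1 - g p.1 * f p.2) / (g p.1 + g p.2)
        ≤ (Cg * Cf + Cg * Cf) / (g p.1 + g p.2) :=
          div_le_div_of_nonneg_right hnum hden.le |>.trans_eq rfl
      _ ≤ (Cg * Cf + Cg * Cf) / (δ + δ) := by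
          apply div_le_div_of_nonneg_left (by positivity) (by linarith) ?_
          have := hgδ p.1; have := hgδ p.2; linarith
  -- pointwise key inequality
  have hkey : ∀ x₁ x₂ : X, g x₂ * f x₁ - g x₁ * f x₂ ≤ S * (g x₁ + g x₂) := by
    intro x₁ x₂
    have hden : 0 < g x₁ + g x₂ := by
      have := hgδ x₁; have := hgδ x₂; linarith
    have hle : (g x₂ * f x₁ - g x₁ * f x₂) / (g x₁ + g x₂) ≤ S :=
      le_ciSup hbdd (x₁, x₂)
    exact (div_le_iff₀ hden).mp hle
  -- integrate in x₁ over μ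
  have step1 : ∀ x₂ : X, g x₂ * F₁ - G * f x₂ ≤ S * (G + a * g x₂) := by
    intro x₂
    have hiL : Integrable (fun x₁ => g x₂ * f x₁ - g x₁ * f x₂) μ :=
      (hfμ.const_mul _).sub (hgμ.mul_const _)
    have hiR : Integrable (fun x₁ => S * (g x₁ + g x₂)) μ :=
      (hgμ.add (integrable_const _)).const_mul _
    have := integral_mono hiL hiR (fun x₁ => hkey x₁ x₂)
    rw [integral_sub (hfμ.const_mul _) (hgμ.mul_const _), integral_const_mul,
      integral_mul_const, integral_const_mul,
      integral_add hgμ (integrable_const _), integral_const] at this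
    simpa [smul_eq_mul, mul_comm, ha, Measure.real] using this
  -- integrate in x₂ over ν
  have step2 : G * F₁ - G * F₂ ≤ S * (G * b + a * G) := by
    have hiL : Integrable (fun x₂ => g x₂ * F₁ - G * f x₂) ν :=
      (hgν.mul_const _).sub (hfν.const_mul _)
    have hiR : Integrable (fun x₂ => S * (G + a * g x₂)) ν :=
      ((integrable_const _).add (hgν.const_mul _)).const_mul _
    have := integral_mono hiL hiR step1
    rw [integral_sub (hgν.mul_const _) (hfν.const_mul _), integral_mul_const,
      integral_const_mul, integral_const_mul,
      integral_add (integrable_const _) (hgν.const_mul _), integral_const,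
      integral_const_mul, hGν] at this
    simpa [smul_eq_mul, mul_comm, mul_left_comm, hb, Measure.real] using this
  have hfin : F₁ - F₂ ≤ S := by
    have h1 : G * (F₁ - F₂) ≤ S * G := by
      have : G * b + a * G = G * (a + b) := by ring
      rw [this, hab, mul_one] at step2
      linarith
    nlinarith
  simpa [signedIntegral, ← hF₁, ← hF₂] using hfin
end

section
/- Let (X,𝒜) be a measurable space with measurable singletons, f, g : X → ℝ measurable functions with g > 0 pointwise, and let x₁ ≠ x₂ be two points of X. Define weights w₁ = g(x₂)/(g(x₁)+g(x₂)) and w₂ = g(x₁)/(g(x₁)+g(x₂)) and the signed measure ω = w₁ δ_{x₁} − w₂ δ_{x₂}. Then ‖ω‖_TV = 1, ∫ g dω = 0, and ∫ f dω = (g(x₂)f(x₁) − g(x₁)f(x₂))/(g(x₁)+g(x₂)). In particular, if (x₁,x₂) maximizes (g(x₂)f(x₁) − g(x₁)f(x₂))/(g(x₁)+g(x₂)), then ω attains the supremum of ∫ f dω over all finite signed measures with ‖ω‖_TV = 1 and ∫ g dω = 0. -/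
open MeasureTheory Set

/-- Auxiliary bound: if `|f - t g| ≤ M` pointwise then
`∫ f dν ≤ M ν(univ) + t ∫ g dν` for a finite measure, even with junk values. -/
lemma aux_int_le {X : Type*} [MeasurableSpace X] (ν : Measure X) [IsFiniteMeasure ν]
    (f g : X → ℝ) (hf : Measurable f) (hg : Measurable g) (t M : ℝ) (hM : 0 ≤ M)
    (hb : ∀ y, |f y - t * g y| ≤ M) :
    ∫ y, f y ∂ν ≤ M * (ν univ).toReal + t * ∫ y, g y ∂ν := by
  have hdiff : Integrable (fun y => f y - t * g y) ν := by
    refine (integrable_const M).mono' ((hf.sub (hg.const_mul t)).aestronglyMeasurable) ?_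
    exact Filter.Eventually.of_forall fun y => by simpa using hb y
  by_cases hgint : Integrable g ν
  · have hfint : Integrable f ν := by
      have : Integrable (fun y => (f y - t * g y) + t * g y) ν :=
        hdiff.add (hgint.const_mul t)
      simpa using this
    have hle : ∀ y, f y ≤ M + t * g y := fun y => by
      have := (abs_le.mp (hb y)).2; linarith
    calc ∫ y, f y ∂ν ≤ ∫ y, (M + t * g y) ∂ν :=
          integral_mono hfint ((integrable_const M).add (hgint.const_mul t)) hle
      _ = M * (ν univ).toReal + t * ∫ y, g y ∂ν := by
          rw [integral_add (integrable_const M) (hgint.const_mul t), integral_const,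
            integral_const_mul]
          simp [smul_eq_mul, mul_comm, Measure.real]
  · by_cases ht : t = 0
    · subst ht
      have hfint : Integrable f ν := by simpa using hdiff
      have hle : ∀ y, f y ≤ M := fun y => by
        have := (abs_le.mp (hb y)).2; simp at this; linarith
      calc ∫ y, f y ∂ν ≤ ∫ _, M ∂ν := integral_mono hfint (integrable_const M) hle
        _ = M * (ν univ).toReal := by rw [integral_const]; simp [mul_comm, Measure.real]
        _ ≤ M * (ν univ).toReal + 0 * ∫ y, g y ∂ν := by simp
    · have hfnint : ¬ Integrable f ν := by
        intro hfint
        have : Integrable (fun y => t * g y) ν := by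
          have h2 := hfint.sub hdiff
          exact h2.congr (Filter.Eventually.of_forall fun y => by simp)
        have : Integrable (fun y => t⁻¹ * (t * g y)) ν := this.const_mul _
        apply hgint
        simpa [inv_mul_cancel_left₀ ht] using this
      rw [integral_undef hfnint, integral_undef hgint]
      have : 0 ≤ M * (ν univ).toReal := mul_nonneg hM ENNReal.toReal_nonneg
      simpa using this

/-- The vega-weighted two-point spread `ω = w₁ δ_{x₁} - w₂ δ_{x₂}`
has unit total variation, is `g`-neutral, realizes the two-point expression,
and is optimal whenever `(x₁,x₂)` maximizes the two-point expression. -/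
theorem two_point_spread_properties_and_optimality
    {X : Type*} [MeasurableSpace X] [MeasurableSingletonClass X]
    (f g : X → ℝ) (hf_meas : Measurable f) (hg_meas : Measurable g)
    (hg_pos : ∀ x, 0 < g x)
    (x₁ x₂ : X) (hx : x₁ ≠ x₂)
    (w₁ w₂ : ℝ)
    (hw₁ : w₁ = g x₂ / (g x₁ + g x₂)) (hw₂ : w₂ = g x₁ / (g x₁ + g x₂))
    (ω : SignedMeasure X)
    (hωdef : ω = w₁ • (Measure.dirac x₁).toSignedMeasure
               - w₂ • (Measure.dirac x₂).toSignedMeasure) :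
    ω.totalVariation univ = 1 ∧
    signedIntegral g ω = 0 ∧
    signedIntegral f ω = (g x₂ * f x₁ - g x₁ * f x₂) / (g x₁ + g x₂) ∧
    ((∀ y₁ y₂ : X, (g y₂ * f y₁ - g y₁ * f y₂) / (g y₁ + g y₂) ≤
        (g x₂ * f x₁ - g x₁ * f x₂) / (g x₁ + g x₂)) →
      ∀ μ : SignedMeasure X, μ.totalVariation univ = 1 →
        signedIntegral g μ = 0 → signedIntegral f μ ≤ signedIntegral f ω) := by
  have hs : 0 < g x₁ + g x₂ := add_pos (hg_pos x₁) (hg_pos x₂)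
  have hs0 : 0 < g x₁ + g x₂ := add_pos (hg_pos x₁) (hg_pos x₂)
  have hw₁0 : 0 ≤ w₁ := by rw [hw₁]; exact le_of_lt (div_pos (hg_pos x₂) hs0)
  have hw₂0 : 0 ≤ w₂ := by rw [hw₂]; exact le_of_lt (div_pos (hg_pos x₁) hs0)
  have hsum : w₁ + w₂ = 1 := by
    rw [hw₁, hw₂, ← add_div, add_comm, div_self hs.ne']
  -- Jordan decomposition of ω
  have hsing : (w₁.toNNReal • Measure.dirac x₁) ⟂ₘ (w₂.toNNReal • Measure.dirac x₂) := by
    refine ⟨{x₂}, measurableSet_singleton x₂, ?_, ?_⟩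
    · simp [Measure.smul_apply, Measure.dirac_apply' _ (measurableSet_singleton x₂), hx]
    · simp [Measure.smul_apply,
        Measure.dirac_apply' _ (measurableSet_singleton x₂).compl]
  set J : MeasureTheory.JordanDecomposition X :=
    ⟨w₁.toNNReal • Measure.dirac x₁, w₂.toNNReal • Measure.dirac x₂, hsing⟩ with hJ
  have hωJ : ω = J.toSignedMeasure := by
    rw [hωdef]
    show _ = (w₁.toNNReal • Measure.dirac x₁).toSignedMeasure
        - (w₂.toNNReal • Measure.dirac x₂).toSignedMeasure
    rw [Measure.toSignedMeasure_smul, Measure.toSignedMeasure_smul]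
    congr 1
    · ext i hi
      rw [VectorMeasure.smul_apply, VectorMeasure.smul_apply]
      simp [NNReal.smul_def, Real.coe_toNNReal _ hw₁0, max_eq_left hw₁0]
    · ext i hi
      rw [VectorMeasure.smul_apply, VectorMeasure.smul_apply]
      simp [NNReal.smul_def, Real.coe_toNNReal _ hw₂0, max_eq_left hw₂0]
  have hJD : ω.toJordanDecomposition = J := SignedMeasure.toJordanDecomposition_eq hωJ
  -- total variation
  have hTV : ω.totalVariation univ = 1 := by
    rw [SignedMeasure.totalVariation, hJD]
    show (w₁.toNNReal • Measure.dirac x₁ + w₂.toNNReal • Measure.dirac x₂) univ = 1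
    have : w₁.toNNReal + w₂.toNNReal = 1 := by
      rw [← Real.toNNReal_add hw₁0 hw₂0, hsum, Real.toNNReal_one]
    simp only [Measure.add_apply, Measure.smul_apply, Measure.dirac_apply_of_mem (mem_univ _),
      ENNReal.smul_def, smul_eq_mul, mul_one]
    rw [← ENNReal.coe_add, this, ENNReal.coe_one]
  -- integrals
  have hint : ∀ h : X → ℝ, Measurable h → signedIntegral h ω = w₁ * h x₁ - w₂ * h x₂ := by
    intro h hh
    rw [signedIntegral, hJD]
    show (∫ x, h x ∂(w₁.toNNReal • Measure.dirac x₁))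
        - (∫ x, h x ∂(w₂.toNNReal • Measure.dirac x₂)) = _
    rw [integral_smul_nnreal_measure, integral_smul_nnreal_measure, integral_dirac,
      integral_dirac]
    simp [NNReal.smul_def, Real.coe_toNNReal _ hw₁0, Real.coe_toNNReal _ hw₂0]
  have hgω : signedIntegral g ω = 0 := by
    rw [hint g hg_meas, hw₁, hw₂]
    field_simp
    ring
  have hfω : signedIntegral f ω = (g x₂ * f x₁ - g x₁ * f x₂) / (g x₁ + g x₂) := by
    rw [hint f hf_meas, hw₁, hw₂]
    field_simp
  refine ⟨hTV, hgω, hfω, ?_⟩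
  -- optimality
  intro hmax μ hμTV hμg
  set M : ℝ := (g x₂ * f x₁ - g x₁ * f x₂) / (g x₁ + g x₂) with hMdef
  have hM0 : 0 ≤ M := by
    have := hmax x₁ x₁
    simpa using this
  have key : ∀ y z : X, (f z - M) * g y ≤ (f y + M) * g z := by
    intro y z
    have h1 := hmax z y
    have h2 : g y * f z - g z * f y ≤ M * (g z + g y) :=
      (div_le_iff₀ (add_pos (hg_pos z) (hg_pos y))).mp h1
    nlinarith
  set S : Set ℝ := Set.range (fun y => (f y - M) / g y) with hS
  have hbdd : BddAbove S := by
    refine ⟨(f x₁ + M) / g x₁, ?_⟩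
    rintro _ ⟨z, rfl⟩
    rw [div_le_div_iff₀ (hg_pos z) (hg_pos x₁)]
    exact key x₁ z
  have hne : S.Nonempty := ⟨_, Set.mem_range_self x₁⟩
  set t : ℝ := sSup S with ht
  have ht_up : ∀ y, f y ≤ M + t * g y := by
    intro y
    have : (f y - M) / g y ≤ t := le_csSup hbdd (Set.mem_range_self y)
    have := (div_le_iff₀ (hg_pos y)).mp this
    linarith
  have ht_lo : ∀ y, t * g y ≤ f y + M := by
    intro y
    have : t ≤ (f y + M) / g y := by
      apply csSup_le hne
      rintro _ ⟨z, rfl⟩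
      rw [div_le_div_iff₀ (hg_pos z) (hg_pos y)]
      exact key y z
    have := (le_div_iff₀ (hg_pos y)).mp this
    linarith
  have hb : ∀ y, |f y - t * g y| ≤ M := by
    intro y
    rw [abs_le]
    constructor <;> [have := ht_lo y; have := ht_up y] <;> linarith
  have hbneg : ∀ y, |(-f) y - (-t) * g y| ≤ M := by
    intro y
    simp only [Pi.neg_apply, neg_mul]
    rw [show -f y - -(t * g y) = -(f y - t * g y) by ring, abs_neg]
    exact hb y
  set νp := μ.toJordanDecomposition.posPart with hνp
  set νn := μ.toJordanDecomposition.negPart with hνn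
  have hup : ∫ y, f y ∂νp ≤ M * (νp univ).toReal + t * ∫ y, g y ∂νp :=
    aux_int_le νp f g hf_meas hg_meas t M hM0 hb
  have hdn : ∫ y, (-f) y ∂νn ≤ M * (νn univ).toReal + (-t) * ∫ y, g y ∂νn :=
    aux_int_le νn (-f) g hf_meas.neg hg_meas (-t) M hM0 hbneg
  have hdn' : -(M * (νn univ).toReal) + t * ∫ y, g y ∂νn ≤ ∫ y, f y ∂νn := by
    have : ∫ y, (-f) y ∂νn = -∫ y, f y ∂νn := by
      simp [integral_neg]
    rw [this] at hdn
    linarith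
  have hmass : (νp univ).toReal + (νn univ).toReal = 1 := by
    have h1 : νp univ + νn univ = 1 := by
      have := hμTV
      rw [SignedMeasure.totalVariation] at this
      simpa [Measure.add_apply] using this
    have hp : νp univ ≠ ⊤ := measure_ne_top _ _
    have hn : νn univ ≠ ⊤ := measure_ne_top _ _
    have := congrArg ENNReal.toReal h1
    rwa [ENNReal.toReal_add hp hn, ENNReal.toReal_one] at this
  have hgint : (∫ y, g y ∂νp) - (∫ y, g y ∂νn) = 0 := hμg
  have : signedIntegral f μ ≤ M := by
    rw [signedIntegral]
    have : (∫ y, f y ∂νp) - (∫ y, f y ∂νn) ≤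
        (M * (νp univ).toReal + t * ∫ y, g y ∂νp)
          - (-(M * (νn univ).toReal) + t * ∫ y, g y ∂νn) := by linarith
    calc (∫ y, f y ∂νp) - (∫ y, f y ∂νn)
        ≤ M * ((νp univ).toReal + (νn univ).toReal)
            + t * ((∫ y, g y ∂νp) - (∫ y, g y ∂νn)) := by linarith
      _ = M := by rw [hmass, hgint]; ring
  rw [hfω]
  exact this
end

section
/- Let (X,𝒜) be a measurable space, f, g, β⁺, β⁻ : X → ℝ bounded measurable functions with g(x) ≥ δ, β⁺(x) ≥ δ and β⁻(x) ≥ δ for all x, for some δ > 0. Then for every finite signed measure ω on X with Jordan decomposition ω = ω⁺ − ω⁻ satisfying ∫ β⁺ dω⁺ + ∫ β⁻ dω⁻ = 1 and ∫ g dω = 0, one has ∫ f dω ≤ sup_{x₁,x₂ ∈ X} (g(x₂)f(x₁) − g(x₁)f(x₂))/(β⁻(x₂)g(x₁) + β⁺(x₁)g(x₂)). -/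
open MeasureTheory Set

private lemma integrable_of_bdd' {X : Type*} [MeasurableSpace X]
    (μ : Measure X) [IsFiniteMeasure μ] {h : X → ℝ} (hm : Measurable h)
    {C : ℝ} (hb : ∀ x, |h x| ≤ C) : Integrable h μ :=
  (integrable_const C).mono' hm.aestronglyMeasurable
    (Filter.Eventually.of_forall fun x => by simpa using hb x)

/-- Optimality bound for trading under a margin constraint:
over all signed measures whose Jordan parts satisfy the margin normalization
`∫ β⁺ dω⁺ + ∫ β⁻ dω⁻ = 1` and the neutrality constraint `∫ g dω = 0`, the
profit `∫ f dω` is dominated by the best margin-weighted two-point spread. -/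
theorem signed_integral_le_two_point_sup_margin
    {X : Type*} [MeasurableSpace X]
    (f g βp βn : X → ℝ)
    (hf_meas : Measurable f) (hg_meas : Measurable g)
    (hβp_meas : Measurable βp) (hβn_meas : Measurable βn)
    (hf_bdd : ∃ C : ℝ, ∀ x, |f x| ≤ C) (hg_bdd : ∃ C : ℝ, ∀ x, |g x| ≤ C)
    (hβp_bdd : ∃ C : ℝ, ∀ x, |βp x| ≤ C) (hβn_bdd : ∃ C : ℝ, ∀ x, |βn x| ≤ C)
    (δ : ℝ) (hδ : 0 < δ)
    (hgδ : ∀ x, δ ≤ g x) (hβpδ : ∀ x, δ ≤ βp x) (hβnδ : ∀ x, δ ≤ βn x) :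
    ∀ ω : SignedMeasure X,
      (∫ x, βp x ∂ω.toJordanDecomposition.posPart)
        + (∫ x, βn x ∂ω.toJordanDecomposition.negPart) = 1 →
      signedIntegral g ω = 0 →
      signedIntegral f ω ≤
        ⨆ p : X × X, (g p.2 * f p.1 - g p.1 * f p.2) /
          (βn p.2 * g p.1 + βp p.1 * g p.2) := by
  obtain ⟨Cf, hCf⟩ := hf_bdd
  obtain ⟨Cg, hCg⟩ := hg_bdd
  obtain ⟨Cβp, hCβp⟩ := hβp_bdd
  obtain ⟨Cβn, hCβn⟩ := hβn_bdd
  intro ω hnorm hneut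
  set μ := ω.toJordanDecomposition.posPart with hμdef
  set ν := ω.toJordanDecomposition.negPart with hνdef
  -- basic integrabilities
  have intfμ : Integrable f μ := integrable_of_bdd' μ hf_meas hCf
  have intfν : Integrable f ν := integrable_of_bdd' ν hf_meas hCf
  have intgμ : Integrable g μ := integrable_of_bdd' μ hg_meas hCg
  have intgν : Integrable g ν := integrable_of_bdd' ν hg_meas hCg
  have intβpμ : Integrable βp μ := integrable_of_bdd' μ hβp_meas hCβp
  have intβnν : Integrable βn ν := integrable_of_bdd' ν hβn_meas hCβn
  set A := ∫ x, f x ∂μ with hA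
  set B := ∫ x, f x ∂ν with hB
  set Gp := ∫ x, g x ∂μ with hGp
  set Gn := ∫ x, g x ∂ν with hGn
  set Bp := ∫ x, βp x ∂μ with hBp
  set Bn := ∫ x, βn x ∂ν with hBn
  have hGeq : Gp = Gn := by
    have := hneut
    simp only [signedIntegral, ← hμdef, ← hνdef, ← hGp, ← hGn] at this
    linarith
  -- the supremum
  set S := ⨆ p : X × X, (g p.2 * f p.1 - g p.1 * f p.2) /
      (βn p.2 * g p.1 + βp p.1 * g p.2) with hS
  have hden_pos : ∀ p : X × X, 0 < βn p.2 * g p.1 + βp p.1 * g p.2 := by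
    intro p
    have h1 := hgδ p.1; have h2 := hgδ p.2
    have h3 := hβpδ p.1; have h4 := hβnδ p.2
    nlinarith
  have hbdd : BddAbove (Set.range fun p : X × X =>
      (g p.2 * f p.1 - g p.1 * f p.2) / (βn p.2 * g p.1 + βp p.1 * g p.2)) := by
    refine ⟨(2 * |Cg| * |Cf|) / (2 * δ * δ), ?_⟩
    rintro _ ⟨p, rfl⟩
    have hd := hden_pos p
    have hd2 : 2 * δ * δ ≤ βn p.2 * g p.1 + βp p.1 * g p.2 := by
      have h1 := hgδ p.1; have h2 := hgδ p.2
      have h3 := hβpδ p.1; have h4 := hβnδ p.2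
      nlinarith
    have hnum : g p.2 * f p.1 - g p.1 * f p.2 ≤ 2 * |Cg| * |Cf| := by
      have e1 : g p.2 * f p.1 ≤ |Cg| * |Cf| := by
        calc g p.2 * f p.1 ≤ |g p.2 * f p.1| := le_abs_self _
          _ = |g p.2| * |f p.1| := abs_mul _ _
          _ ≤ |Cg| * |Cf| := by
              apply mul_le_mul ((hCg p.2).trans (le_abs_self _))
                ((hCf p.1).trans (le_abs_self _)) (abs_nonneg _) (abs_nonneg _)
      have e2 : -(g p.1 * f p.2) ≤ |Cg| * |Cf| := by
        calc -(g p.1 * f p.2) ≤ |g p.1 * f p.2| := neg_le_abs _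
          _ = |g p.1| * |f p.2| := abs_mul _ _
          _ ≤ |Cg| * |Cf| := by
              apply mul_le_mul ((hCg p.1).trans (le_abs_self _))
                ((hCf p.2).trans (le_abs_self _)) (abs_nonneg _) (abs_nonneg _)
      linarith
    calc (g p.2 * f p.1 - g p.1 * f p.2) / (βn p.2 * g p.1 + βp p.1 * g p.2)
        ≤ (2 * |Cg| * |Cf|) / (βn p.2 * g p.1 + βp p.1 * g p.2) := by
          exact (div_le_div_iff_of_pos_right hd).mpr hnum
      _ ≤ (2 * |Cg| * |Cf|) / (2 * δ * δ) := by
          apply div_le_div_of_nonneg_left (by positivity) (by positivity) hd2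
  have hnum_le : ∀ p : X × X, g p.2 * f p.1 - g p.1 * f p.2 ≤
      S * (βn p.2 * g p.1 + βp p.1 * g p.2) := by
    intro p
    have hd := hden_pos p
    have h1 : (g p.2 * f p.1 - g p.1 * f p.2) / (βn p.2 * g p.1 + βp p.1 * g p.2) ≤ S :=
      le_ciSup hbdd p
    calc g p.2 * f p.1 - g p.1 * f p.2
        = ((g p.2 * f p.1 - g p.1 * f p.2) / (βn p.2 * g p.1 + βp p.1 * g p.2)) *
            (βn p.2 * g p.1 + βp p.1 * g p.2) := (div_mul_cancel₀ _ hd.ne').symm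
      _ ≤ S * (βn p.2 * g p.1 + βp p.1 * g p.2) :=
          mul_le_mul_of_nonneg_right h1 hd.le
  -- inner integration over μ (variable x₁)
  have ineq2 : ∀ x₂, g x₂ * A - Gp * f x₂ ≤ S * (βn x₂ * Gp + Bp * g x₂) := by
    intro x₂
    have intL : Integrable (fun x₁ => g x₂ * f x₁ - g x₁ * f x₂) μ :=
      (intfμ.const_mul _).sub (intgμ.mul_const _)
    have intR : Integrable (fun x₁ => S * (βn x₂ * g x₁ + βp x₁ * g x₂)) μ :=
      (((intgμ.const_mul _).add (intβpμ.mul_const _)).const_mul _)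
    have h1 := integral_mono intL intR (fun x₁ => hnum_le (x₁, x₂))
    have eL : ∫ x₁, (g x₂ * f x₁ - g x₁ * f x₂) ∂μ = g x₂ * A - Gp * f x₂ := by
      rw [integral_sub (intfμ.const_mul _) (intgμ.mul_const _),
        integral_const_mul, integral_mul_const]
    have eR : ∫ x₁, S * (βn x₂ * g x₁ + βp x₁ * g x₂) ∂μ
        = S * (βn x₂ * Gp + Bp * g x₂) := by
      rw [integral_const_mul, integral_add (intgμ.const_mul _) (intβpμ.mul_const _),
        integral_const_mul, integral_mul_const]
    rw [eL, eR] at h1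
    exact h1
  -- outer integration over ν (variable x₂)
  have ineq3 : Gn * A - Gp * B ≤ S * (Bn * Gp + Bp * Gn) := by
    have intL : Integrable (fun x₂ => g x₂ * A - Gp * f x₂) ν :=
      (intgν.mul_const _).sub (intfν.const_mul _)
    have intR : Integrable (fun x₂ => S * (βn x₂ * Gp + Bp * g x₂)) ν :=
      (((intβnν.mul_const _).add (intgν.const_mul _)).const_mul _)
    have h1 := integral_mono intL intR ineq2
    have eL : ∫ x₂, (g x₂ * A - Gp * f x₂) ∂ν = Gn * A - Gp * B := by
      rw [integral_sub (intgν.mul_const _) (intfν.const_mul _),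
        integral_mul_const, integral_const_mul]
    have eR : ∫ x₂, S * (βn x₂ * Gp + Bp * g x₂) ∂ν
        = S * (Bn * Gp + Bp * Gn) := by
      rw [integral_const_mul, integral_add (intβnν.mul_const _) (intgν.const_mul _),
        integral_mul_const, integral_const_mul]
    rw [eL, eR] at h1
    exact h1
  -- positivity of Gp
  have hm0 : (0:ℝ) ≤ (μ Set.univ).toReal := ENNReal.toReal_nonneg
  have hn0 : (0:ℝ) ≤ (ν Set.univ).toReal := ENNReal.toReal_nonneg
  have hGpge : δ * (μ Set.univ).toReal ≤ Gp := by
    have := integral_mono (integrable_const δ) intgμ hgδ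
    rwa [integral_const, smul_eq_mul, mul_comm] at this
  have hGnge : δ * (ν Set.univ).toReal ≤ Gn := by
    have := integral_mono (integrable_const δ) intgν hgδ
    rwa [integral_const, smul_eq_mul, mul_comm] at this
  have hBple : Bp ≤ Cβp * (μ Set.univ).toReal := by
    have := integral_mono intβpμ (integrable_const Cβp)
      (fun x => (abs_le.mp (hCβp x)).2)
    rwa [integral_const, smul_eq_mul, mul_comm] at this
  have hBnle : Bn ≤ Cβn * (ν Set.univ).toReal := by
    have := integral_mono intβnν (integrable_const Cβn)
      (fun x => (abs_le.mp (hCβn x)).2)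
    rwa [integral_const, smul_eq_mul, mul_comm] at this
  have hnorm' : Bp + Bn = 1 := hnorm
  have hGppos : 0 < Gp := by
    by_contra h
    push_neg at h
    have hm : (μ Set.univ).toReal = 0 := by nlinarith
    have hn : (ν Set.univ).toReal = 0 := by nlinarith [hGeq]
    rw [hm] at hBple; rw [hn] at hBnle
    simp at hBple hBnle
    linarith
  -- conclude
  have key : Gp * (A - B) ≤ Gp * S := by
    have : Gn * A - Gp * B = Gp * (A - B) := by rw [hGeq]; ring
    have h2 : S * (Bn * Gp + Bp * Gn) = Gp * S := by
      rw [← hGeq]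
      have : Bn * Gp + Bp * Gp = Gp * (Bp + Bn) := by ring
      rw [this, hnorm']
      ring
    calc Gp * (A - B) = Gn * A - Gp * B := by rw [hGeq]; ring
      _ ≤ S * (Bn * Gp + Bp * Gn) := ineq3
      _ = Gp * S := h2
  have : A - B ≤ S := le_of_mul_le_mul_left key hGppos
  simpa [signedIntegral, ← hμdef, ← hνdef, ← hA, ← hB, ← hS] using this
end
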